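/- Assume n ≥ 2, 0 ≤ ω ≤ √2, 0 ≤ ζ ≤ √2, c_1 ≥ 0 and c_3 ∈ ℝ, and for 1 ≤ i ≤ n define r_i : ℝ^m → ℝ by r_i(x) = (n/2) Σ_{l ∈ L_i} ⟨b_l, x⟩² + (c_1/2)‖x‖² − c_3 n x_1 if i = 1, and r_i(x) = (n/2) Σ_{l ∈ L_i} ⟨b_l, x⟩² + (c_1/2)‖x‖² if 2 ≤ i ≤ n. Then: (i) each r_i is (2n + c_1)-smooth; (ii) each r_i is c_1-strongly convex, i.e., x ↦ r_i(x) − (c_1/2)‖x‖² is convex; (iii) the family {r_i}_{i=1}^n is L'-average smooth with L' = √( (4/n)[(n + c_1)² + n²] + c_1² ). -/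

import Mathlib

open scoped RealInnerProductSpace BigOperators

section Helpers

variable {E : Type*} [NormedAddCommGroup E] [InnerProductSpace ℝ E] [CompleteSpace E]

lemma myHasGradientAt {f : E → ℝ} {D : E →L[ℝ] ℝ} {g x : E}
    (h : HasFDerivAt f D x) (hg : ∀ y, D y = ⟪g, y⟫) : HasGradientAt f g x := by
  rw [hasGradientAt_iff_hasFDerivAt]
  have hD : InnerProductSpace.toDual ℝ E g = D := ContinuousLinearMap.ext fun y => by
    rw [InnerProductSpace.toDual_apply_apply, hg]
  rw [hD]; exact h

lemma myGrad_inner (a x : E) : HasGradientAt (fun y => ⟪a, y⟫) a x :=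
  myHasGradientAt ((innerSL ℝ a).hasFDerivAt) fun _ => rfl

lemma myGrad_inner_sq (a x : E) : HasGradientAt (fun y => ⟪a, y⟫ ^ 2) ((2 * ⟪a, x⟫) • a) x := by
  have h := ((innerSL ℝ a).hasFDerivAt (x := x)).mul ((innerSL ℝ a).hasFDerivAt (x := x))
  have h' : HasFDerivAt (fun y => ⟪a, y⟫ ^ 2)
      (((innerSL ℝ) a) x • (innerSL ℝ) a + ((innerSL ℝ) a) x • (innerSL ℝ) a) x := by
    refine h.congr_of_eventuallyEq ?_
    filter_upwards with y; simp [sq]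
  refine myHasGradientAt h' fun y => by
    simp [inner_smul_left]; ring

lemma myGrad_norm_sq (x : E) : HasGradientAt (fun y : E => ‖y‖ ^ 2) ((2:ℝ) • x) x := by
  have h := (hasFDerivAt_id x).inner ℝ (hasFDerivAt_id x)
  have h' : HasFDerivAt (fun y : E => ‖y‖ ^ 2)
      ((fderivInnerCLM ℝ (id x, id x)).comp
        ((ContinuousLinearMap.id ℝ E).prod (ContinuousLinearMap.id ℝ E))) x := by
    refine h.congr_of_eventuallyEq ?_
    filter_upwards with y
    exact (real_inner_self_eq_norm_sq y).symm
  refine myHasGradientAt h' fun y => by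
    simp [inner_smul_left, real_inner_comm]
    ring

lemma myGrad_const_mul {f : E → ℝ} {g : E} {x : E} (c : ℝ) (h : HasGradientAt f g x) :
    HasGradientAt (fun y => c * f y) (c • g) x := by
  refine myHasGradientAt (h.hasFDerivAt.const_mul c) fun y => ?_
  simp [inner_smul_left, InnerProductSpace.toDual_apply_apply]

lemma myGrad_add {f₁ f₂ : E → ℝ} {g₁ g₂ : E} {x : E}
    (h₁ : HasGradientAt f₁ g₁ x) (h₂ : HasGradientAt f₂ g₂ x) :
    HasGradientAt (fun y => f₁ y + f₂ y) (g₁ + g₂) x := by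
  refine myHasGradientAt (h₁.hasFDerivAt.add h₂.hasFDerivAt) fun y => ?_
  simp [inner_add_left, InnerProductSpace.toDual_apply_apply]

lemma myGrad_sub {f₁ f₂ : E → ℝ} {g₁ g₂ : E} {x : E}
    (h₁ : HasGradientAt f₁ g₁ x) (h₂ : HasGradientAt f₂ g₂ x) :
    HasGradientAt (fun y => f₁ y - f₂ y) (g₁ - g₂) x := by
  refine myHasGradientAt (h₁.hasFDerivAt.sub h₂.hasFDerivAt) fun y => ?_
  simp [inner_sub_left, InnerProductSpace.toDual_apply_apply]

lemma myGrad_sum {ι : Type*} {s : Finset ι} {f : ι → E → ℝ} {g : ι → E} {x : E}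
    (h : ∀ l ∈ s, HasGradientAt (f l) (g l) x) :
    HasGradientAt (fun y => ∑ l ∈ s, f l y) (∑ l ∈ s, g l) x := by
  refine myHasGradientAt (HasFDerivAt.fun_sum fun l hl => (h l hl).hasFDerivAt) fun y => ?_
  simp [sum_inner, InnerProductSpace.toDual_apply_apply]

lemma myConvexOn_inner (v : E) : ConvexOn ℝ Set.univ (fun x => ⟪v, x⟫) := by
  refine ⟨convex_univ, fun x _ y _ a b _ _ _ => le_of_eq ?_⟩
  simp [inner_add_right, inner_smul_right]

lemma myConvexOn_sum {ι : Type*} (s : Finset ι) (f : ι → E → ℝ)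
    (h : ∀ l ∈ s, ConvexOn ℝ Set.univ (f l)) :
    ConvexOn ℝ Set.univ (fun x => ∑ l ∈ s, f l x) := by
  classical
  induction s using Finset.induction with
  | empty => simpa using convexOn_const (0:ℝ) convex_univ
  | insert a s hnotmem ih =>
    simp only [Finset.sum_insert hnotmem]
    exact (h a (Finset.mem_insert_self a s)).add
      (ih fun l hl => h l (Finset.mem_insert_of_mem hl))

lemma myConvexOn_inner_sq (v : E) : ConvexOn ℝ Set.univ (fun x => ⟪v, x⟫ ^ 2) := by
  have h := (Even.convexOn_pow (𝕜 := ℝ) (n := 2) even_two).comp_linearMap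
    ((innerSL ℝ v).toLinearMap)
  simpa [Function.comp_def] using h

end Helpers

set_option maxHeartbeats 2000000 in
theorem decomposition_quadratic_smoothness
    (n m : ℕ) (hn : 2 ≤ n) (hm : 2 ≤ m)
    (ω ζ c₁ c₃ : ℝ)
    (hω : 0 ≤ ω ∧ ω ≤ Real.sqrt 2) (hζ : 0 ≤ ζ ∧ ζ ≤ Real.sqrt 2) (hc₁ : 0 ≤ c₁)
    (b : ℕ → EuclideanSpace ℝ (Fin m))
    (hb0 : b 0 = ω • EuclideanSpace.single (⟨0, by omega⟩ : Fin m) 1)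
    (hbl : ∀ (l : ℕ) (_h1 : 1 ≤ l) (_h2 : l ≤ m - 1),
      b l = EuclideanSpace.single (⟨l - 1, by omega⟩ : Fin m) 1
            - EuclideanSpace.single (⟨l, by omega⟩ : Fin m) 1)
    (hbm : b m = ζ • EuclideanSpace.single (⟨m - 1, by omega⟩ : Fin m) 1)
    (r : ℕ → EuclideanSpace ℝ (Fin m) → ℝ)
    (hr : ∀ i : ℕ, 1 ≤ i → i ≤ n → ∀ x,
      r i x = (n / 2 : ℝ) *
          (∑ l ∈ (Finset.range (m + 1)).filter (fun l => l % n = (i - 1) % n),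
            ⟪b l, x⟫ ^ 2)
        + (c₁ / 2) * ‖x‖ ^ 2
        - (if i = 1 then c₃ * n * x ⟨0, by omega⟩ else 0)) :
    (∀ i : ℕ, 1 ≤ i → i ≤ n → ∀ u v,
      ‖gradient (r i) u - gradient (r i) v‖ ≤ (2 * n + c₁) * ‖u - v‖) ∧
    (∀ i : ℕ, 1 ≤ i → i ≤ n →
      ConvexOn ℝ Set.univ (fun x => r i x - (c₁ / 2) * ‖x‖ ^ 2)) ∧
    (∀ u v, (1 / n : ℝ) * ∑ i ∈ Finset.Icc 1 n, ‖gradient (r i) u - gradient (r i) v‖ ^ 2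
      ≤ Real.sqrt ((4 / n) * ((n + c₁) ^ 2 + n ^ 2) + c₁ ^ 2) ^ 2 * ‖u - v‖ ^ 2) := by
  classical
  set F : ℕ → Finset ℕ :=
    fun i => (Finset.range (m + 1)).filter (fun l => l % n = (i - 1) % n) with hF
  have he₀ : (0:ℕ) < m := by omega
  -- support of b l
  have hsep : ∀ l l' : ℕ, l < l' → l % n = l' % n → l + 2 ≤ l' := by
    intro l l' hlt hmod
    have hdvd : n ∣ l' - l := (Nat.modEq_iff_dvd' hlt.le).mp hmod
    have := Nat.le_of_dvd (by omega) hdvd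
    omega
  have h_zero : ∀ l, l ≤ m → ∀ j : Fin m, (j : ℕ) ≠ l - 1 → (j : ℕ) ≠ l → b l j = 0 := by
    intro l hl j hj1 hj2
    rcases Nat.eq_zero_or_pos l with h0 | hpos
    · subst h0
      rw [hb0]
      have hne : j ≠ (⟨0, by omega⟩ : Fin m) := by
        intro h; apply hj2; rw [h]
    
      simp [EuclideanSpace.single_apply, hne]
    · rcases eq_or_lt_of_le hl with hm' | hlt
      · rw [hm'] at hj1 ⊢
        rw [hbm]
        have hne : j ≠ (⟨m - 1, by omega⟩ : Fin m) := by
          intro h; apply hj1; rw [h]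
        simp [EuclideanSpace.single_apply, hne]
      · rw [hbl l hpos (by omega)]
        have hne1 : j ≠ (⟨l - 1, by omega⟩ : Fin m) := by
          intro h; apply hj1; rw [h]
        have hne2 : j ≠ (⟨l, by omega⟩ : Fin m) := by
          intro h; apply hj2; rw [h]
        simp [EuclideanSpace.single_apply, hne1, hne2]
  -- norm bound
  have hω2 : ω ^ 2 ≤ 2 := by
    nlinarith [hω.1, hω.2, Real.sq_sqrt (by norm_num : (0:ℝ) ≤ 2), Real.sqrt_nonneg 2]
  have hζ2 : ζ ^ 2 ≤ 2 := by
    nlinarith [hζ.1, hζ.2, Real.sq_sqrt (by norm_num : (0:ℝ) ≤ 2), Real.sqrt_nonneg 2]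
  have h_bnorm : ∀ l, l ≤ m → ‖b l‖ ^ 2 ≤ 2 := by
    intro l hl
    rcases Nat.eq_zero_or_pos l with h0 | hpos
    · subst h0
      rw [hb0, norm_smul, EuclideanSpace.norm_single]
      simpa [abs_of_nonneg hω.1] using hω2
    · rcases eq_or_lt_of_le hl with hm' | hlt
      · rw [hm', hbm, norm_smul, EuclideanSpace.norm_single]
        simpa [abs_of_nonneg hζ.1] using hζ2
      · rw [hbl l hpos (by omega)]
        have hne : (⟨l - 1, by omega⟩ : Fin m) ≠ (⟨l, by omega⟩ : Fin m) := by
          simp [Fin.ext_iff]; omega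
        rw [norm_sub_sq_real]
        rw [EuclideanSpace.norm_single, EuclideanSpace.norm_single]
        rw [EuclideanSpace.inner_single_left]
        simp [EuclideanSpace.single_apply, hne]
        norm_num
  -- orthogonality
  have h_orth0 : ∀ l l', l ≤ m → l' ≤ m → l < l' → l % n = l' % n → ⟪b l, b l'⟫ = 0 := by
    intro l l' hl hl' hlt hmod
    have hs := hsep l l' hlt hmod
    rw [PiLp.inner_apply]
    refine Finset.sum_eq_zero fun j _ => ?_
    by_cases hj : (j : ℕ) = l' - 1 ∨ (j : ℕ) = l'
    · have : b l j = 0 := h_zero l hl j (by omega) (by omega)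
      simp [this]
    · push_neg at hj
      have : b l' j = 0 := h_zero l' hl' j hj.1 hj.2
      simp [this]
  have h_orth : ∀ l l', l ≤ m → l' ≤ m → l ≠ l' → l % n = l' % n → ⟪b l, b l'⟫ = 0 := by
    intro l l' hl hl' hne hmod
    rcases lt_or_gt_of_ne hne with h | h
    · exact h_orth0 l l' hl hl' h hmod
    · rw [real_inner_comm]
      exact h_orth0 l' l hl' hl h hmod.symm
  -- local index sets
  set J : ℕ → Finset (Fin m) :=
    fun l => Finset.univ.filter (fun j : Fin m => (j : ℕ) = l - 1 ∨ (j : ℕ) = l) with hJ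
  -- Cauchy-Schwarz type bound
  have h_CS : ∀ l, l ≤ m → ∀ w : EuclideanSpace ℝ (Fin m),
      ⟪b l, w⟫ ^ 2 ≤ 2 * ∑ j ∈ J l, (w j) ^ 2 := by
    intro l hl w
    have hnonneg : ∀ j ∈ J l, (0:ℝ) ≤ (w j) ^ 2 := fun j _ => sq_nonneg _
    rcases Nat.eq_zero_or_pos l with h0 | hpos
    · subst h0
      have hmem : (⟨0, by omega⟩ : Fin m) ∈ J 0 := by
        simp [hJ]
      have hle := Finset.single_le_sum hnonneg hmem
      rw [hb0, real_inner_smul_left, EuclideanSpace.inner_single_left]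
      simp only [map_one, one_mul]
      nlinarith [sq_nonneg (w (⟨0, by omega⟩ : Fin m)), hω2, hω.1, sq_nonneg ω]
    · rcases eq_or_lt_of_le hl with hm' | hlt
      · rw [hm'] at hnonneg ⊢
        have hmem : (⟨m - 1, by omega⟩ : Fin m) ∈ J m := by
          simp [hJ]
        have hle := Finset.single_le_sum hnonneg hmem
        rw [hbm, real_inner_smul_left, EuclideanSpace.inner_single_left]
        simp only [map_one, one_mul]
        nlinarith [sq_nonneg (w (⟨m - 1, by omega⟩ : Fin m)), hζ2, hζ.1, sq_nonneg ζ]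
      · have hne : (⟨l - 1, by omega⟩ : Fin m) ≠ (⟨l, by omega⟩ : Fin m) := by
          simp [Fin.ext_iff]; omega
        have hsub : ({(⟨l - 1, by omega⟩ : Fin m), (⟨l, by omega⟩ : Fin m)} : Finset (Fin m)) ⊆ J l := by
          intro j hj
          simp only [Finset.mem_insert, Finset.mem_singleton] at hj
          rcases hj with h | h <;> subst h <;> simp [hJ]
        have hle := Finset.sum_le_sum_of_subset_of_nonneg hsub
          (fun j _ _ => sq_nonneg (w j))
        rw [Finset.sum_pair hne] at hle
        rw [hbl l hpos (by omega), inner_sub_left,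
          EuclideanSpace.inner_single_left, EuclideanSpace.inner_single_left]
        simp only [map_one, one_mul]
        nlinarith [sq_nonneg (w (⟨l - 1, by omega⟩ : Fin m) + w (⟨l, by omega⟩ : Fin m))]
  have h_normsq : ∀ w : EuclideanSpace ℝ (Fin m), ‖w‖ ^ 2 = ∑ j, (w j) ^ 2 := by
    intro w
    rw [← real_inner_self_eq_norm_sq, PiLp.inner_apply]
    exact Finset.sum_congr rfl fun j _ => by simp [sq]
  -- disjointness of J over an index class
  have h_disj : ∀ l l', l ≤ m → l' ≤ m → l ≠ l' → l % n = l' % n → Disjoint (J l) (J l') := by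
    intro l l' hl hl' hne hmod
    rw [Finset.disjoint_left]
    intro j hj hj'
    simp only [hJ, Finset.mem_filter, Finset.mem_univ, true_and] at hj hj'
    rcases lt_or_gt_of_ne hne with h | h
    · have := hsep l l' h hmod; omega
    · have := hsep l' l h hmod.symm; omega
  -- per-class bound : T_i ≤ 2‖w‖²
  have hFmem : ∀ i, ∀ l ∈ F i, l ≤ m := by
    intro i l hl
    simp only [hF, Finset.mem_filter, Finset.mem_range] at hl
    omega
  have hFmod : ∀ i, ∀ l ∈ F i, ∀ l' ∈ F i, l ≠ l' → l % n = l' % n := by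
    intro i l hl l' hl' _
    simp only [hF, Finset.mem_filter] at hl hl'
    rw [hl.2, hl'.2]
  have h_T : ∀ i, 1 ≤ i → i ≤ n → ∀ w : EuclideanSpace ℝ (Fin m),
      ∑ l ∈ F i, ⟪b l, w⟫ ^ 2 ≤ 2 * ‖w‖ ^ 2 := by
    intro i h1 h2 w
    have hmem := hFmem i
    have hmod := hFmod i
    calc ∑ l ∈ F i, ⟪b l, w⟫ ^ 2
        ≤ ∑ l ∈ F i, 2 * ∑ j ∈ J l, (w j) ^ 2 :=
          Finset.sum_le_sum fun l hl => h_CS l (hmem l hl) w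
      _ = 2 * ∑ l ∈ F i, ∑ j ∈ J l, (w j) ^ 2 := by rw [Finset.mul_sum]
      _ = 2 * ∑ j ∈ (F i).biUnion J, (w j) ^ 2 := by
          rw [Finset.sum_biUnion]
          intro l hl l' hl' hne
          exact h_disj l l' (hmem l hl) (hmem l' hl') hne
            (hmod l hl l' hl' hne)
      _ ≤ 2 * ∑ j, (w j) ^ 2 := by
          have := Finset.sum_le_sum_of_subset_of_nonneg
            (Finset.subset_univ ((F i).biUnion J)) (fun j _ _ => sq_nonneg (w j))
          linarith
      _ = 2 * ‖w‖ ^ 2 := by rw [h_normsq]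
  -- global bound : Σ_l ⟪b l, w⟫² ≤ 4‖w‖²
  have h_Ttot : ∀ w : EuclideanSpace ℝ (Fin m),
      ∑ l ∈ Finset.range (m + 1), ⟪b l, w⟫ ^ 2 ≤ 4 * ‖w‖ ^ 2 := by
    intro w
    have step1 : ∑ l ∈ Finset.range (m + 1), ⟪b l, w⟫ ^ 2
        ≤ ∑ l ∈ Finset.range (m + 1), 2 * ∑ j ∈ J l, (w j) ^ 2 :=
      Finset.sum_le_sum fun l hl => h_CS l (by simp only [Finset.mem_range] at hl; omega) w
    have step2 : ∑ l ∈ Finset.range (m + 1), ∑ j ∈ J l, (w j) ^ 2 ≤ 2 * ∑ j, (w j) ^ 2 := by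
      have heq : ∀ l, ∑ j ∈ J l, (w j) ^ 2
          = ∑ j : Fin m, if ((j : ℕ) = l - 1 ∨ (j : ℕ) = l) then (w j) ^ 2 else 0 := by
        intro l
        rw [hJ]
        rw [Finset.sum_filter]
      calc ∑ l ∈ Finset.range (m + 1), ∑ j ∈ J l, (w j) ^ 2
          = ∑ l ∈ Finset.range (m + 1), ∑ j : Fin m,
              if ((j : ℕ) = l - 1 ∨ (j : ℕ) = l) then (w j) ^ 2 else 0 := by
            exact Finset.sum_congr rfl fun l _ => heq l
        _ = ∑ j : Fin m, ∑ l ∈ Finset.range (m + 1),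
              if ((j : ℕ) = l - 1 ∨ (j : ℕ) = l) then (w j) ^ 2 else 0 := Finset.sum_comm
        _ ≤ ∑ j : Fin m, 2 * (w j) ^ 2 := by
            refine Finset.sum_le_sum fun j _ => ?_
            calc ∑ l ∈ Finset.range (m + 1),
                  (if ((j : ℕ) = l - 1 ∨ (j : ℕ) = l) then (w j) ^ 2 else 0)
                ≤ ∑ l ∈ Finset.range (m + 1),
                  ((if l = (j : ℕ) then (w j) ^ 2 else 0)
                    + (if l = (j : ℕ) + 1 then (w j) ^ 2 else 0)) := by
                  refine Finset.sum_le_sum fun l _ => ?_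
                  by_cases hc : ((j : ℕ) = l - 1 ∨ (j : ℕ) = l)
                  · rw [if_pos hc]
                    have : l = (j : ℕ) ∨ l = (j : ℕ) + 1 := by omega
                    rcases this with h | h
                    · rw [if_pos h]
                      have : (0:ℝ) ≤ if l = (j : ℕ) + 1 then (w j) ^ 2 else 0 := by positivity
                      linarith
                    · rw [if_pos h]
                      have : (0:ℝ) ≤ if l = (j : ℕ) then (w j) ^ 2 else 0 := by positivity
                      linarith
                  · rw [if_neg hc]
                    positivity
              _ ≤ 2 * (w j) ^ 2 := by
                  rw [Finset.sum_add_distrib, Finset.sum_ite_eq', Finset.sum_ite_eq']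
                  have h1 : (if ((j : ℕ)) ∈ Finset.range (m + 1) then (w j) ^ 2 else 0)
                      ≤ (w j) ^ 2 := by
                    split
                    · exact le_rfl
                    · positivity
                  have h2 : (if ((j : ℕ) + 1) ∈ Finset.range (m + 1) then (w j) ^ 2 else 0)
                      ≤ (w j) ^ 2 := by
                    split
                    · exact le_rfl
                    · positivity
                  linarith
        _ = 2 * ∑ j, (w j) ^ 2 := by rw [Finset.mul_sum]
    calc ∑ l ∈ Finset.range (m + 1), ⟪b l, w⟫ ^ 2
        ≤ ∑ l ∈ Finset.range (m + 1), 2 * ∑ j ∈ J l, (w j) ^ 2 := step1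
      _ = 2 * ∑ l ∈ Finset.range (m + 1), ∑ j ∈ J l, (w j) ^ 2 := by rw [Finset.mul_sum]
      _ ≤ 2 * (2 * ∑ j, (w j) ^ 2) := by linarith [step2]
      _ = 4 * ‖w‖ ^ 2 := by rw [h_normsq]; ring
  have h_grad : ∀ i, 1 ≤ i → i ≤ n → ∀ x : EuclideanSpace ℝ (Fin m),
      HasGradientAt (r i)
        ((n : ℝ) • (∑ l ∈ F i, ⟪b l, x⟫ • b l) + c₁ • x
          - (if i = 1 then (c₃ * n) • EuclideanSpace.single (⟨0, by omega⟩ : Fin m) (1:ℝ) else 0)) x := by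
    intro i h1 h2 x
    have hfun : r i = fun y => (n / 2 : ℝ) * (∑ l ∈ F i, ⟪b l, y⟫ ^ 2)
        + (c₁ / 2) * ‖y‖ ^ 2 - (if i = 1 then c₃ * n * y ⟨0, by omega⟩ else 0) :=
      funext fun y => hr i h1 h2 y
    rw [hfun]
    have hsum : HasGradientAt (fun y : EuclideanSpace ℝ (Fin m) => ∑ l ∈ F i, ⟪b l, y⟫ ^ 2)
        (∑ l ∈ F i, (2 * ⟪b l, x⟫) • b l) x :=
      myGrad_sum fun l _ => myGrad_inner_sq (b l) x
    have hA := myGrad_const_mul ((n : ℝ) / 2) hsum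
    have hB := myGrad_const_mul (c₁ / 2) (myGrad_norm_sq x)
    have hC : HasGradientAt (fun y : EuclideanSpace ℝ (Fin m) =>
        (if i = 1 then c₃ * n * y ⟨0, by omega⟩ else 0))
        (if i = 1 then (c₃ * n) • EuclideanSpace.single (⟨0, by omega⟩ : Fin m) (1:ℝ) else 0) x := by
      by_cases hi : i = 1
      · simp only [hi, if_true]
        have hbase := myGrad_const_mul (c₃ * (n:ℝ))
          (myGrad_inner (EuclideanSpace.single (⟨0, by omega⟩ : Fin m) (1:ℝ)) x)
        refine hbase.congr_of_eventuallyEq ?_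
        filter_upwards with y
        rw [EuclideanSpace.inner_single_left]
        simp
      · simp only [hi, if_false]
        exact hasGradientAt_const x 0
    have hAll := myGrad_sub (myGrad_add hA hB) hC
    have hEq : (n : ℝ) • (∑ l ∈ F i, ⟪b l, x⟫ • b l) + c₁ • x
          - (if i = 1 then (c₃ * n) • EuclideanSpace.single (⟨0, by omega⟩ : Fin m) (1:ℝ) else 0)
        = (((n:ℝ)/2) • (∑ l ∈ F i, (2 * ⟪b l, x⟫) • b l) + (c₁/2) • ((2:ℝ) • x))
          - (if i = 1 then (c₃ * n) • EuclideanSpace.single (⟨0, by omega⟩ : Fin m) (1:ℝ) else 0) := by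
      congr 1
      congr 1
      · rw [Finset.smul_sum, Finset.smul_sum]
        refine Finset.sum_congr rfl fun l _ => ?_
        rw [smul_smul, smul_smul]
        congr 1
        ring
      · rw [smul_smul]
        congr 1
        ring
    rw [hEq]
    exact hAll
  have h_gd : ∀ i, 1 ≤ i → i ≤ n → ∀ u v : EuclideanSpace ℝ (Fin m),
      gradient (r i) u - gradient (r i) v
        = (n : ℝ) • (∑ l ∈ F i, ⟪b l, u - v⟫ • b l) + c₁ • (u - v) := by
    intro i h1 h2 u v
    rw [(h_grad i h1 h2 u).gradient, (h_grad i h1 h2 v).gradient]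
    have hs : (∑ l ∈ F i, ⟪b l, u - v⟫ • b l)
        = (∑ l ∈ F i, ⟪b l, u⟫ • b l) - (∑ l ∈ F i, ⟪b l, v⟫ • b l) := by
      rw [← Finset.sum_sub_distrib]
      exact Finset.sum_congr rfl fun l _ => by rw [inner_sub_right, sub_smul]
    rw [hs, smul_sub, smul_sub]
    abel
  have h_gd_sq : ∀ i, 1 ≤ i → i ≤ n → ∀ u v : EuclideanSpace ℝ (Fin m),
      ‖gradient (r i) u - gradient (r i) v‖ ^ 2
        ≤ (2 * (n:ℝ)^2 + 2 * n * c₁) * (∑ l ∈ F i, ⟪b l, u - v⟫ ^ 2)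
          + c₁ ^ 2 * ‖u - v‖ ^ 2 := by
    intro i h1 h2 u v
    rw [h_gd i h1 h2 u v]
    set w := u - v with hw
    set S := ∑ l ∈ F i, ⟪b l, w⟫ • b l with hS
    set T := ∑ l ∈ F i, ⟪b l, w⟫ ^ 2 with hT
    have hT0 : (0:ℝ) ≤ T := Finset.sum_nonneg fun l _ => sq_nonneg _
    have hSw : ⟪S, w⟫ = T := by
      rw [hS, sum_inner, hT]
      exact Finset.sum_congr rfl fun l _ => by rw [real_inner_smul_left, sq]
    have hSnorm : ‖S‖ ^ 2 = ∑ l ∈ F i, ⟪b l, w⟫ ^ 2 * ‖b l‖ ^ 2 := by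
      rw [← real_inner_self_eq_norm_sq, hS, sum_inner]
      refine Finset.sum_congr rfl fun l hl => ?_
      rw [real_inner_smul_left, inner_sum]
      rw [Finset.sum_eq_single l ?h0 ?h1]
      · rw [real_inner_smul_right, real_inner_self_eq_norm_sq]
        ring
      case h0 =>
        intro l' hl' hne
        have horth := h_orth l l' (hFmem i l hl) (hFmem i l' hl') hne.symm
          (hFmod i l hl l' hl' hne.symm)
        rw [real_inner_smul_right, horth, mul_zero]
      case h1 =>
        intro hnot
        exact absurd hl hnot
    have hSnorm2 : ‖S‖ ^ 2 ≤ 2 * T := by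
      rw [hSnorm, hT, Finset.mul_sum]
      refine Finset.sum_le_sum fun l hl => ?_
      have hb2 := h_bnorm l (hFmem i l hl)
      nlinarith [sq_nonneg (⟪b l, w⟫ : ℝ)]
    have hexp : ‖(n:ℝ) • S + c₁ • w‖ ^ 2
        = (n:ℝ)^2 * ‖S‖^2 + 2 * ((n:ℝ) * c₁ * ⟪S, w⟫) + c₁^2 * ‖w‖^2 := by
      rw [norm_add_sq_real, norm_smul, norm_smul, real_inner_smul_left, real_inner_smul_right]
      rw [Real.norm_eq_abs, Real.norm_eq_abs, abs_of_nonneg (by positivity : (0:ℝ) ≤ (n:ℝ)),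
        abs_of_nonneg hc₁]
      ring
    rw [hexp, hSw]
    nlinarith [mul_le_mul_of_nonneg_left hSnorm2 (sq_nonneg ((n:ℝ))), hT0,
      mul_nonneg (mul_nonneg (Nat.cast_nonneg n : (0:ℝ) ≤ n) hc₁) hT0]
  refine ⟨?_, ?_, ?_⟩
  · -- part (i)
    intro i h1 h2 u v
    have hsq := h_gd_sq i h1 h2 u v
    have hT2 := h_T i h1 h2 (u - v)
    have hn2 : (2:ℝ) ≤ (n:ℝ) := by exact_mod_cast hn
    have hT0 : (0:ℝ) ≤ ∑ l ∈ F i, ⟪b l, u - v⟫ ^ 2 :=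
      Finset.sum_nonneg fun l _ => sq_nonneg _
    have hcoef : (0:ℝ) ≤ 2 * (n:ℝ)^2 + 2 * n * c₁ := by positivity
    have hbound : ‖gradient (r i) u - gradient (r i) v‖ ^ 2
        ≤ ((2 * n + c₁) * ‖u - v‖) ^ 2 := by
      have hmul := mul_le_mul_of_nonneg_left hT2 hcoef
      nlinarith [sq_nonneg (‖u - v‖), norm_nonneg (u - v)]
    calc ‖gradient (r i) u - gradient (r i) v‖
        = Real.sqrt (‖gradient (r i) u - gradient (r i) v‖ ^ 2) :=
          (Real.sqrt_sq (norm_nonneg _)).symm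
      _ ≤ Real.sqrt (((2 * n + c₁) * ‖u - v‖) ^ 2) := Real.sqrt_le_sqrt hbound
      _ = (2 * n + c₁) * ‖u - v‖ := Real.sqrt_sq
          (mul_nonneg (by nlinarith : (0:ℝ) ≤ 2 * (n:ℝ) + c₁) (norm_nonneg _))
  · -- part (ii)
    intro i h1 h2
    set vi : EuclideanSpace ℝ (Fin m) :=
      (if i = 1 then EuclideanSpace.single (⟨0, he₀⟩ : Fin m) (-(c₃ * (n:ℝ))) else 0) with hvi
    have hfun : (fun x : EuclideanSpace ℝ (Fin m) => r i x - (c₁ / 2) * ‖x‖ ^ 2)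
        = fun x => (n / 2 : ℝ) * (∑ l ∈ F i, ⟪b l, x⟫ ^ 2) + ⟪vi, x⟫ := by
      funext x
      rw [hr i h1 h2 x, hvi]
      by_cases hi : i = 1
      · rw [if_pos hi, if_pos hi, EuclideanSpace.inner_single_left]
        simp only [starRingEnd_apply, star_trivial, hF]
        ring
      · rw [if_neg hi, if_neg hi, inner_zero_left]
        ring
    rw [hfun]
    have hA : ConvexOn ℝ Set.univ
        (fun x : EuclideanSpace ℝ (Fin m) => ∑ l ∈ F i, ⟪b l, x⟫ ^ 2) :=
      myConvexOn_sum _ _ fun l _ => myConvexOn_inner_sq (b l)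
    have hA' := hA.smul (show (0:ℝ) ≤ (n:ℝ)/2 by positivity)
    exact hA'.add (myConvexOn_inner vi)
  · -- part (iii)
    intro u v
    set w := u - v with hw
    have hn0 : (0:ℝ) < n := by
      have : 0 < n := by omega
      exact_mod_cast this
    have hX : (0:ℝ) ≤ (4 / n) * (((n:ℝ) + c₁) ^ 2 + (n:ℝ) ^ 2) + c₁ ^ 2 := by positivity
    rw [Real.sq_sqrt hX]
    have hpart : ∑ i ∈ Finset.Icc 1 n, ∑ l ∈ F i, ⟪b l, w⟫ ^ 2
        = ∑ l ∈ Finset.range (m + 1), ⟪b l, w⟫ ^ 2 := by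
      have hmaps : ∀ l ∈ Finset.range (m + 1), l % n + 1 ∈ Finset.Icc 1 n := by
        intro l _
        simp only [Finset.mem_Icc]
        have := Nat.mod_lt l (show 0 < n by omega)
        omega
      have hfib := Finset.sum_fiberwise_of_maps_to (g := fun l => l % n + 1) hmaps
        (fun l => (⟪b l, w⟫ : ℝ) ^ 2)
      rw [← hfib]
      refine Finset.sum_congr rfl fun i hi => ?_
      refine Finset.sum_congr ?_ fun _ _ => rfl
      rw [hF]
      refine Finset.filter_congr fun l _ => ?_
      simp only [Finset.mem_Icc] at hi
      have hlt : l % n < n := Nat.mod_lt _ (by omega)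
      have hi1 : (i - 1) % n = i - 1 := Nat.mod_eq_of_lt (by omega)
      rw [hi1]
      constructor <;> intro h <;> omega
    have hbig : ∑ i ∈ Finset.Icc 1 n, ‖gradient (r i) u - gradient (r i) v‖ ^ 2
        ≤ (2*(n:ℝ)^2 + 2*n*c₁) * ∑ l ∈ Finset.range (m+1), ⟪b l, w⟫^2
          + n * (c₁^2 * ‖w‖^2) := by
      calc ∑ i ∈ Finset.Icc 1 n, ‖gradient (r i) u - gradient (r i) v‖ ^ 2
          ≤ ∑ i ∈ Finset.Icc 1 n,
              ((2*(n:ℝ)^2 + 2*n*c₁) * (∑ l ∈ F i, ⟪b l, w⟫^2) + c₁^2 * ‖w‖^2) :=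
            Finset.sum_le_sum fun i hi => by
              simp only [Finset.mem_Icc] at hi
              exact h_gd_sq i hi.1 hi.2 u v
        _ = (2*(n:ℝ)^2 + 2*n*c₁) * ∑ l ∈ Finset.range (m+1), ⟪b l, w⟫^2
              + n * (c₁^2 * ‖w‖^2) := by
            rw [Finset.sum_add_distrib, ← Finset.mul_sum, hpart, Finset.sum_const,
              Nat.card_Icc, nsmul_eq_mul]
            norm_num
    have htot := h_Ttot w
    have hcoef : (0:ℝ) ≤ 2*(n:ℝ)^2 + 2*n*c₁ := by positivity
    have h2 : ∑ i ∈ Finset.Icc 1 n, ‖gradient (r i) u - gradient (r i) v‖ ^ 2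
        ≤ (2*(n:ℝ)^2 + 2*n*c₁) * (4 * ‖w‖^2) + n * (c₁^2 * ‖w‖^2) :=
      le_trans hbig (by nlinarith [mul_le_mul_of_nonneg_left htot hcoef])
    have hne : (n:ℝ) ≠ 0 := ne_of_gt hn0
    have hfinal : (1/(n:ℝ)) * ((2*(n:ℝ)^2 + 2*n*c₁) * (4 * ‖w‖^2) + n * (c₁^2 * ‖w‖^2))
        ≤ ((4/n) * (((n:ℝ)+c₁)^2 + (n:ℝ)^2) + c₁^2) * ‖w‖^2 := by
      have heq : (1/(n:ℝ)) * ((2*(n:ℝ)^2 + 2*n*c₁) * (4 * ‖w‖^2) + n * (c₁^2 * ‖w‖^2))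
          = (8*(n:ℝ) + 8*c₁ + c₁^2) * ‖w‖^2 := by
        field_simp
        ring
      have heq2 : ((4/n) * (((n:ℝ)+c₁)^2 + (n:ℝ)^2) + c₁^2) * ‖w‖^2
          = ((8*(n:ℝ) + 8*c₁ + c₁^2) + 4*c₁^2/(n:ℝ)) * ‖w‖^2 := by
        congr 1
        field_simp
        ring
      rw [heq, heq2]
      have hd : (0:ℝ) ≤ 4*c₁^2/(n:ℝ) := by positivity
      nlinarith [mul_nonneg hd (sq_nonneg ‖w‖)]
    calc (1/(n:ℝ)) * ∑ i ∈ Finset.Icc 1 n, ‖gradient (r i) u - gradient (r i) v‖ ^ 2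
        ≤ (1/(n:ℝ)) * ((2*(n:ℝ)^2 + 2*n*c₁) * (4 * ‖w‖^2) + n * (c₁^2 * ‖w‖^2)) :=
          mul_le_mul_of_nonneg_left h2 (by positivity)
      _ ≤ ((4/n) * (((n:ℝ)+c₁)^2 + (n:ℝ)^2) + c₁^2) * ‖w‖^2 := hfinal
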